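/- Consider the constrained optimization problem: minimize (x − y − 8)² subject to x ≥ 1, y³ − x ≤ 0, y ≥ 0, y − z − u₁(z³ − x) + u₂z ≤ 0, 1 + 3u₁z² − u₂ = 0, u₁ ≥ 0, u₂ ≥ 0, in variables (x, y, z, u₁, u₂). At the feasible point (8, 0, −3, 0, 1), the Mangasarian–Fromovitz constraint qualification holds: the gradient of the unique equality constraint, (0,0,0,27,−1), is nonzero, and the direction d = (0,1,0,1,27) satisfies dᵀ(0,0,0,27,−1) = 0 and has strictly negative inner product with the gradients (0,−1,0,0,0), (0,1,0,35,−3), (0,0,0,−1,0) of the three active inequality constraints. -/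

import Mathlib

/-- For the WDP reformulation
`min (x−y−8)²` s.t. `x ≥ 1, y³ − x ≤ 0, y ≥ 0,
`y − z − u₁(z³−x) + u₂z ≤ 0`, `1 + 3u₁z² − u₂ = 0`, `u₁ ≥ 0`, `u₂ ≥ 0`,
MFCQ holds at the feasible point `(8, 0, −3, 0, 1)`:
the equality-constraint gradient `(0,0,0,27,−1)` is nonzero (hence linearly
independent) and `d = (0,1,0,1,27)` is orthogonal to it and makes a strictly
negative inner product with the gradients of all active inequality
constraints. -/
theorem example_wdp_mfcq_holds
    -- variables ordered (x, y, z, u₁, u₂) as w 0, w 1, w 2, w 3, w 4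
    (H G1 G2 G3 G4 G5 G6 : (Fin 5 → ℝ) → ℝ)
    (hH : ∀ w, H w = 1 + 3 * w 3 * (w 2) ^ 2 - w 4)          -- equality constraint
    (hG1 : ∀ w, G1 w = -(w 1))                                -- y ≥ 0 (active)
    (hG2 : ∀ w, G2 w = w 1 - w 2 - w 3 * ((w 2) ^ 3 - w 0) + w 4 * w 2) -- (active)
    (hG3 : ∀ w, G3 w = -(w 3))                                -- u₁ ≥ 0 (active)
    (hG4 : ∀ w, G4 w = 1 - w 0)                               -- x ≥ 1
    (hG5 : ∀ w, G5 w = (w 1) ^ 3 - w 0)                       -- y³ − x ≤ 0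
    (hG6 : ∀ w, G6 w = -(w 4))                                -- u₂ ≥ 0
    (w0 d : Fin 5 → ℝ)
    (hw0 : w0 = ![8, 0, -3, 0, 1])
    (hd : d = ![0, 1, 0, 1, 27]) :
    -- w0 is feasible, with G1, G2, G3 the active inequality constraints
    (H w0 = 0 ∧ G1 w0 = 0 ∧ G2 w0 = 0 ∧ G3 w0 = 0 ∧
      G4 w0 < 0 ∧ G5 w0 < 0 ∧ G6 w0 < 0) ∧
    -- the gradients are as claimed
    (∀ dw, fderiv ℝ H w0 dw = 27 * dw 3 - dw 4) ∧
    (∀ dw, fderiv ℝ G1 w0 dw = -dw 1) ∧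
    (∀ dw, fderiv ℝ G2 w0 dw = dw 1 + 35 * dw 3 - 3 * dw 4) ∧
    (∀ dw, fderiv ℝ G3 w0 dw = -dw 3) ∧
    -- MFCQ: the equality gradient is nonzero (linearly independent), and
    -- d satisfies the Mangasarian–Fromovitz direction conditions
    fderiv ℝ H w0 ≠ 0 ∧
    fderiv ℝ H w0 d = 0 ∧
    fderiv ℝ G1 w0 d < 0 ∧
    fderiv ℝ G2 w0 d < 0 ∧
    fderiv ℝ G3 w0 d < 0 := by
  have eH : H = fun w => 1 + 3 * w 3 * (w 2) ^ 2 - w 4 := funext hH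
  have eG1 : G1 = fun w => -(w 1) := funext hG1
  have eG2 : G2 = fun w => w 1 - w 2 - w 3 * ((w 2) ^ 3 - w 0) + w 4 * w 2 := funext hG2
  have eG3 : G3 = fun w => -(w 3) := funext hG3
  subst eH eG1 eG2 eG3 hw0 hd
  set w0 : Fin 5 → ℝ := ![8, 0, -3, 0, 1] with hw0
  have h0 := hasFDerivAt_apply (𝕜 := ℝ) (F' := fun _ : Fin 5 => ℝ) 0 w0
  have h1 := hasFDerivAt_apply (𝕜 := ℝ) (F' := fun _ : Fin 5 => ℝ) 1 w0
  have h2 := hasFDerivAt_apply (𝕜 := ℝ) (F' := fun _ : Fin 5 => ℝ) 2 w0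
  have h3 := hasFDerivAt_apply (𝕜 := ℝ) (F' := fun _ : Fin 5 => ℝ) 3 w0
  have h4 := hasFDerivAt_apply (𝕜 := ℝ) (F' := fun _ : Fin 5 => ℝ) 4 w0
  have hHgrad : ∀ dw, fderiv ℝ (fun w : Fin 5 → ℝ => 1 + 3 * w 3 * (w 2) ^ 2 - w 4) w0 dw
      = 27 * dw 3 - dw 4 := by
    have hF := (((h3.const_mul (3:ℝ)).mul (h2.mul h2)).const_add 1).sub h4
    intro dw
    simp only [pow_two]
    erw [hF.fderiv]
    simp [hw0]
    ring
  have hG1grad : ∀ dw, fderiv ℝ (fun w : Fin 5 → ℝ => -(w 1)) w0 dw = -dw 1 := by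
    intro dw
    erw [h1.neg.fderiv]
    simp
  have hG2grad : ∀ dw, fderiv ℝ
      (fun w : Fin 5 → ℝ => w 1 - w 2 - w 3 * ((w 2) ^ 3 - w 0) + w 4 * w 2) w0 dw
      = dw 1 + 35 * dw 3 - 3 * dw 4 := by
    have hF := ((h1.sub h2).sub (h3.mul (((h2.mul h2).mul h2).sub h0))).add (h4.mul h2)
    intro dw
    simp only [show ∀ a : ℝ, a ^ 3 = a * a * a from fun a => by ring]
    erw [hF.fderiv]
    simp [hw0]
    ring
  have hG3grad : ∀ dw, fderiv ℝ (fun w : Fin 5 → ℝ => -(w 3)) w0 dw = -dw 3 := by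
    intro dw
    erw [h3.neg.fderiv]
    simp
  refine ⟨?_, hHgrad, hG1grad, hG2grad, hG3grad, ?_, ?_, ?_, ?_, ?_⟩
  · constructor
    · simp [hw0]
    refine ⟨by simp [hw0], by norm_num [hw0, Matrix.cons_val_two, Matrix.cons_val_three, Matrix.cons_val_four], by simp [hw0], ?_, ?_, ?_⟩ <;>
      simp [hG4, hG5, hG6, hw0, Matrix.cons_val_two, Matrix.cons_val_three, Matrix.cons_val_four]
  · intro h
    have := hHgrad ![0, 0, 0, 1, 0]
    rw [h] at this
    simp at this
  · rw [hHgrad]; norm_num [Matrix.cons_val_two, Matrix.cons_val_three, Matrix.cons_val_four]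
  · rw [hG1grad]; norm_num [Matrix.cons_val_two, Matrix.cons_val_three, Matrix.cons_val_four]
  · rw [hG2grad]; norm_num [Matrix.cons_val_two, Matrix.cons_val_three, Matrix.cons_val_four]
  · rw [hG3grad]; norm_num [Matrix.cons_val_two, Matrix.cons_val_three, Matrix.cons_val_four]
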